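/- Let Λ be a finite index set, d ≥ 1, B i j ∈ M_d(ℂ) with Σ_{i∈Λ} (B i j)ᴴ (B i j) = 1 for each j, and let ρ = (ρ_i) be a block state. Fix k ≥ 1 and j ∈ Λ, and suppose p ∈ M_d(ℂ) is an orthogonal projection with (M^k(ρ))_j · p = (M^k(ρ))_j. Then for every path π = (i_0, i_1, …, i_k) with i_k = j one has (1 − p) · B_π ρ_{i_0} (B_π)ᴴ · (1 − p) = 0, and consequently B_π ρ_{i_0} (B_π)ᴴ · p = B_π ρ_{i_0} (B_π)ᴴ. (This is the key computation in the converse direction of the Appendix, showing that reducibility of the quantum Markov chain implies reducibility of the OQRW in the sense of Carbone–Pautrat.) -/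

import Mathlib

open Matrix
open scoped ComplexOrder

/-- The path operator `B_π = B i_l i_{l-1} ⋯ B i_1 i_0` for a path
`π = (i_0, i_1, …, i_l)` in `Λ`. -/
noncomputable def pathOp {Λ : Type*} {d : ℕ} (B : Λ → Λ → Matrix (Fin d) (Fin d) ℂ)
    {l : ℕ} (π : Fin (l + 1) → Λ) : Matrix (Fin d) (Fin d) ℂ :=
  ((List.ofFn (fun k : Fin l => B (π k.succ) (π k.castSucc))).reverse).prod

lemma pathOp_zero {Λ : Type*} {d : ℕ} (B : Λ → Λ → Matrix (Fin d) (Fin d) ℂ)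
    (π : Fin 1 → Λ) : pathOp B π = 1 := by
  simp [pathOp]

lemma pathOp_succ {Λ : Type*} {d : ℕ} (B : Λ → Λ → Matrix (Fin d) (Fin d) ℂ)
    {l : ℕ} (π : Fin (l + 2) → Λ) :
    pathOp B π
      = B (π (Fin.last (l + 1))) (π ((Fin.last l).castSucc)) * pathOp B (π ∘ Fin.castSucc) := by
  unfold pathOp
  rw [List.ofFn_succ', List.concat_eq_append, List.reverse_append]
  simp only [List.reverse_cons, List.reverse_nil, List.nil_append, List.singleton_append,
    List.prod_cons]
  rw [Fin.succ_last]
  have h : (fun i : Fin l => B (π i.castSucc.succ) (π i.castSucc.castSucc))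
      = fun i : Fin l => B ((π ∘ Fin.castSucc) i.succ) ((π ∘ Fin.castSucc) i.castSucc) := by
    funext i
    rfl
  rw [h]

lemma psd_sum {ι : Type*} {d : ℕ} (s : Finset ι) (f : ι → Matrix (Fin d) (Fin d) ℂ)
    (h : ∀ i ∈ s, (f i).PosSemidef) : (∑ i ∈ s, f i).PosSemidef := by
  classical
  induction s using Finset.induction with
  | empty => simpa using Matrix.PosSemidef.zero
  | insert _ _ hx ih =>
    rw [Finset.sum_insert hx]
    exact (h _ (Finset.mem_insert_self _ _)).add (ih fun i hi => h i (Finset.mem_insert_of_mem hi))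

/-- A PSD matrix whose negation is also PSD is zero. -/
lemma psd_neg_eq_zero {d : ℕ} {Y : Matrix (Fin d) (Fin d) ℂ}
    (hY : Y.PosSemidef) (hY' : (-Y).PosSemidef) : Y = 0 := by
  have hv : ∀ x : Fin d → ℂ, Y *ᵥ x = 0 := by
    intro x
    rw [← hY.dotProduct_mulVec_zero_iff x]
    have h1 := hY.dotProduct_mulVec_nonneg x
    have h2 := hY'.dotProduct_mulVec_nonneg x
    rw [Matrix.neg_mulVec, dotProduct_neg, le_neg, neg_zero] at h2
    exact le_antisymm h2 h1
  ext i jj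
  have := congrFun (hv (Pi.single jj 1)) i
  simpa [Matrix.mulVec_single] using this

open scoped MatrixOrder in
/-- If `X` is PSD and `q X q = 0` with `q` Hermitian, then `X q = 0`. -/
lemma psd_sandwich_zero {d : ℕ} {X q : Matrix (Fin d) (Fin d) ℂ}
    (hX : X.PosSemidef) (hq : qᴴ = q) (h : q * X * q = 0) : X * q = 0 := by
  have hs : (CFC.sqrt X).PosSemidef := (CFC.sqrt_nonneg X).posSemidef
  have hA : CFC.sqrt X * CFC.sqrt X = X := CFC.sqrt_mul_sqrt_self X hX.nonneg
  have hAq : CFC.sqrt X * q = 0 := by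
    rw [← Matrix.conjTranspose_mul_self_eq_zero]
    have : (CFC.sqrt X * q)ᴴ = q * CFC.sqrt X := by
      rw [Matrix.conjTranspose_mul, hq, hs.isHermitian.eq]
    rw [this]
    calc q * CFC.sqrt X * (CFC.sqrt X * q) = q * (CFC.sqrt X * CFC.sqrt X) * q := by
          simp only [mul_assoc]
      _ = q * X * q := by rw [hA]
      _ = 0 := h
  calc X * q = CFC.sqrt X * (CFC.sqrt X * q) := by rw [← mul_assoc, hA]
    _ = 0 := by rw [hAq, mul_zero]

/-- Key computation in the converse direction of the Appendix: if
`(M^k ρ)_j p = (M^k ρ)_j` for an orthogonal projection `p`, then for every path `π`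
ending at `j`, `(1-p) B_π ρ_{i_0} B_πᴴ (1-p) = 0` and `B_π ρ_{i_0} B_πᴴ p = B_π ρ_{i_0} B_πᴴ`. -/
theorem appendix_converse_step {Λ : Type*} [Fintype Λ] {d : ℕ} (hd : 1 ≤ d)
    (B : Λ → Λ → Matrix (Fin d) (Fin d) ℂ)
    (hB : ∀ j : Λ, ∑ i : Λ, (B i j)ᴴ * B i j = 1)
    (ρ : Λ → Matrix (Fin d) (Fin d) ℂ)
    (hρ : ∀ j, (ρ j).PosSemidef)
    (htr : ∑ j, (ρ j).trace = 1)
    (M : (Λ → Matrix (Fin d) (Fin d) ℂ) → Λ → Matrix (Fin d) (Fin d) ℂ)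
    (hM : ∀ σ i, M σ i = ∑ j : Λ, B i j * σ j * (B i j)ᴴ)
    (k : ℕ) (hk : 1 ≤ k) (j : Λ)
    (p : Matrix (Fin d) (Fin d) ℂ) (hp1 : pᴴ = p) (hp2 : p * p = p)
    (hjp : (M^[k] ρ) j * p = (M^[k] ρ) j) :
    ∀ π : Fin (k + 1) → Λ, π (Fin.last k) = j →
      (1 - p) * (pathOp B π * ρ (π 0) * (pathOp B π)ᴴ) * (1 - p) = 0 ∧
      pathOp B π * ρ (π 0) * (pathOp B π)ᴴ * p = pathOp B π * ρ (π 0) * (pathOp B π)ᴴ := by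
  classical
  -- all iterates are blockwise PSD
  have hpsd : ∀ l (i : Λ), ((M^[l] ρ) i).PosSemidef := by
    intro l
    induction l with
    | zero => simpa using hρ
    | succ l ih =>
      intro i
      rw [Function.iterate_succ_apply', hM]
      exact psd_sum _ _ fun jj _ => (ih jj).mul_mul_conjTranspose_same _
  -- the key domination inequality
  have hkey : ∀ l (π : Fin (l + 1) → Λ),
      ((M^[l] ρ) (π (Fin.last l)) - pathOp B π * ρ (π 0) * (pathOp B π)ᴴ).PosSemidef := by
    intro l
    induction l with
    | zero =>
      intro π
      have h0 : Fin.last 0 = (0 : Fin 1) := rfl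
      simp only [pathOp_zero, Function.iterate_zero_apply, h0, one_mul,
        Matrix.conjTranspose_one, mul_one, sub_self]
      exact Matrix.PosSemidef.zero
    | succ l ih =>
      intro π
      set a := π (Fin.last (l + 1)) with ha
      set b := π ((Fin.last l).castSucc) with hb
      have hb' : (π ∘ Fin.castSucc) (Fin.last l) = b := rfl
      have h0' : (π ∘ Fin.castSucc) 0 = π 0 := by
        simp [Function.comp]
      set X := pathOp B (π ∘ Fin.castSucc) * ρ ((π ∘ Fin.castSucc) 0)
        * (pathOp B (π ∘ Fin.castSucc))ᴴ with hX
      have hIH := ih (π ∘ Fin.castSucc)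
      rw [hb'] at hIH
      have hsucc : (M^[l + 1] ρ) a = ∑ jj : Λ, B a jj * (M^[l] ρ) jj * (B a jj)ᴴ := by
        rw [Function.iterate_succ_apply', hM]
      have hsum : ∑ jj : Λ, B a jj * (M^[l] ρ) jj * (B a jj)ᴴ
          = B a b * (M^[l] ρ) b * (B a b)ᴴ
            + ∑ jj ∈ Finset.univ.erase b, B a jj * (M^[l] ρ) jj * (B a jj)ᴴ := by
        exact (Finset.add_sum_erase _ _ (Finset.mem_univ b)).symm
      have hdecomp : (M^[l + 1] ρ) a - pathOp B π * ρ (π 0) * (pathOp B π)ᴴ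
          = B a b * ((M^[l] ρ) b - X) * (B a b)ᴴ
            + ∑ jj ∈ Finset.univ.erase b, B a jj * (M^[l] ρ) jj * (B a jj)ᴴ := by
        rw [hsucc, hsum, pathOp_succ, hX, h0', ← ha, ← hb, Matrix.conjTranspose_mul]
        noncomm_ring
      rw [hdecomp]
      exact (hIH.mul_mul_conjTranspose_same _).add
        (psd_sum _ _ fun jj _ => (hpsd l jj).mul_mul_conjTranspose_same _)
  intro π hπ
  set X := pathOp B π * ρ (π 0) * (pathOp B π)ᴴ with hXdef
  have hXpsd : X.PosSemidef := (hρ (π 0)).mul_mul_conjTranspose_same _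
  have hN := hpsd k j
  have hpN : p * (M^[k] ρ) j = (M^[k] ρ) j := by
    have := congrArg Matrix.conjTranspose hjp
    rwa [Matrix.conjTranspose_mul, hp1, hN.isHermitian.eq] at this
  have hNq : (1 - p) * (M^[k] ρ) j * (1 - p) = 0 := by
    rw [sub_mul, one_mul, hpN, sub_self, zero_mul]
  have hq : (1 - p)ᴴ = 1 - p := by
    rw [Matrix.conjTranspose_sub, Matrix.conjTranspose_one, hp1]
  have hdom := hkey k π
  rw [hπ] at hdom
  have hY : ((1 - p) * X * (1 - p)).PosSemidef := by
    have := hXpsd.mul_mul_conjTranspose_same (1 - p)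
    rwa [hq] at this
  have hY' : (-((1 - p) * X * (1 - p))).PosSemidef := by
    have h1 := hdom.mul_mul_conjTranspose_same (1 - p)
    rw [hq] at h1
    have h2 : (1 - p) * ((M^[k] ρ) j - X) * (1 - p)
        = -((1 - p) * X * (1 - p)) := by
      calc (1 - p) * ((M^[k] ρ) j - X) * (1 - p)
          = (1 - p) * (M^[k] ρ) j * (1 - p) - (1 - p) * X * (1 - p) := by noncomm_ring
        _ = -((1 - p) * X * (1 - p)) := by rw [hNq, zero_sub]
    rwa [h2] at h1
  have hzero : (1 - p) * X * (1 - p) = 0 := psd_neg_eq_zero hY hY'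
  refine ⟨hzero, ?_⟩
  have hXq : X * (1 - p) = 0 := psd_sandwich_zero hXpsd hq hzero
  rw [mul_sub, mul_one, sub_eq_zero] at hXq
  exact hXq.symm
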